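/- arXiv:1110.1151 — 3 statements merged into one kernel-verified Lean document; each statement's English description precedes it below -/
import Mathlib

section
/- Let k > 0 and let x : ℝ → ℝ be differentiable with x'(t) = x(t)(1 - k x(t)²) for all t ≥ 0. If x(0) < 0, then x(t) converges to -√(1/k) as t → ∞. -/
open Set Filter intervalIntegral

/-- Linear Gronwall identity: a solution of `y' = c t * y` on `[0,∞)` has exponential form. -/
lemma lin_ode_exp (c y : ℝ → ℝ) (hc : Continuous c) (hy : Differentiable ℝ y)
    (hode : ∀ t, 0 ≤ t → deriv y t = c t * y t) :
    ∀ t, 0 ≤ t → y t = y 0 * Real.exp (∫ s in (0:ℝ)..t, c s) := by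
  intro T hT
  set I : ℝ → ℝ := fun t => ∫ s in (0:ℝ)..t, c s with hIdef
  have hI : ∀ t : ℝ, HasDerivAt I (c t) t := fun t =>
    integral_hasDerivAt_right (hc.intervalIntegrable 0 t)
      (hc.stronglyMeasurableAtFilter _ _) hc.continuousAt
  have hIdiff : Differentiable ℝ I := fun t => (hI t).differentiableAt
  have hIcont : Continuous I := hIdiff.continuous
  set u : ℝ → ℝ := fun t => y t * Real.exp (-(I t)) with hudef
  have hu : ∀ t, 0 ≤ t → HasDerivAt u 0 t := by
    intro t ht
    have h1 : HasDerivAt (fun s => Real.exp (-(I s))) (Real.exp (-(I t)) * (-(c t))) t := by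
      simpa [mul_comm] using ((hI t).neg).exp
    have h2 := (hy t).hasDerivAt.mul h1
    have h3 : deriv y t * Real.exp (-I t) + y t * (Real.exp (-I t) * -c t) = 0 := by
      rw [hode t ht]; ring
    rw [h3] at h2
    exact h2
  have hucont : Continuous u :=
    hy.continuous.mul (Real.continuous_exp.comp hIcont.neg)
  have key : u T = u 0 := by
    have := constant_of_has_deriv_right_zero (f := u) (a := 0) (b := T)
      (hucont.continuousOn)
      (fun s hs => (hu s hs.1).hasDerivWithinAt)
    exact this T ⟨hT, le_rfl⟩
  have hu0 : u 0 = y 0 := by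
    simp [hudef, hIdef, intervalIntegral.integral_same]
  have hexp : Real.exp (-(I T)) * Real.exp (I T) = 1 := by
    rw [← Real.exp_add]; simp
  calc y T = y T * (Real.exp (-(I T)) * Real.exp (I T)) := by rw [hexp, mul_one]
    _ = u T * Real.exp (I T) := by rw [hudef]; ring
    _ = y 0 * Real.exp (I T) := by rw [key, hu0]

/-- For `k > 0`, every solution of `ẋ = x (1 - k x²)` with negative initial
condition converges to the ancillary stable equilibrium `-√(1/k)`. -/
theorem stmt3 (k : ℝ) (hk : 0 < k) (x : ℝ → ℝ)
    (hdiff : Differentiable ℝ x)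
    (hode : ∀ t : ℝ, 0 ≤ t → deriv x t = x t * (1 - k * (x t) ^ 2))
    (h0 : x 0 < 0) :
    Filter.Tendsto x Filter.atTop (nhds (-Real.sqrt (1 / k))) := by
  set a := Real.sqrt (1 / k) with hadef
  have ha2 : a ^ 2 = 1 / k := Real.sq_sqrt (by positivity)
  have hapos : 0 < a := Real.sqrt_pos.2 (by positivity)
  have hka : k * a ^ 2 = 1 := by rw [ha2]; field_simp
  have hxc : Continuous x := hdiff.continuous
  -- x stays negative
  have hneg : ∀ t, 0 ≤ t → x t < 0 := by
    have h := lin_ode_exp (fun t => 1 - k * (x t) ^ 2) x (by continuity) hdiff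
      (fun t ht => by rw [hode t ht]; ring)
    intro t ht
    rw [h t ht]
    exact mul_neg_of_neg_of_pos h0 (Real.exp_pos _)
  -- x + a keeps its sign
  have hshift := lin_ode_exp (fun t => -k * x t * (x t - a)) (fun t => x t + a)
    (by continuity) (hdiff.add_const a)
    (by
      intro t ht
      have hd : deriv (fun s => x s + a) t = deriv x t := by
        simp [deriv_add_const]
      rw [hd, hode t ht]
      show x t * (1 - k * (x t) ^ 2) = -k * x t * (x t - a) * (x t + a)
      linear_combination (-(x t)) * hka)
  -- helper: f value negative on (-a, 0)
  have hfneg : ∀ z : ℝ, -a < z → z < 0 → z * (1 - k * z ^ 2) < 0 := by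
    intro z h1 h2
    have hz2 : z ^ 2 < a ^ 2 := by nlinarith
    have : 0 < 1 - k * z ^ 2 := by nlinarith
    exact mul_neg_of_neg_of_pos h2 this
  have hfpos : ∀ z : ℝ, z < -a → 0 < z * (1 - k * z ^ 2) := by
    intro z h1
    have hz2 : a ^ 2 < z ^ 2 := by nlinarith
    have h2 : 1 - k * z ^ 2 < 0 := by nlinarith
    have hz : z < 0 := by linarith
    exact mul_pos_of_neg_of_neg hz h2
  rcases lt_trichotomy (x 0 + a) 0 with hc | hc | hc
  · -- Case x 0 < -a : x increases to -a
    have hlt : ∀ t, 0 ≤ t → x t < -a := by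
      intro t ht
      have h := hshift t ht
      have : x t + a < 0 := by
        rw [h]; exact mul_neg_of_neg_of_pos hc (Real.exp_pos _)
      linarith
    have hderiv_nonneg : ∀ t, 0 ≤ t → 0 ≤ deriv x t := by
      intro t ht
      rw [hode t ht]
      exact (hfpos _ (hlt t ht)).le
    have hmono : MonotoneOn x (Ici (0:ℝ)) := by
      apply monotoneOn_of_deriv_nonneg (convex_Ici 0) hxc.continuousOn
        hdiff.differentiableOn
      intro t ht
      rw [interior_Ici] at ht
      exact hderiv_nonneg t (le_of_lt ht)
    set y : ℝ → ℝ := fun t => x (max t 0) with hy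
    have hymono : Monotone y := by
      intro s t hst
      exact hmono (le_max_right s 0) (le_max_right t 0) (max_le_max hst le_rfl)
    have hybdd : BddAbove (range y) := by
      refine ⟨-a, ?_⟩
      rintro _ ⟨t, rfl⟩
      exact (hlt (max t 0) (le_max_right t 0)).le
    set L := ⨆ t, y t with hL
    have htendy : Tendsto y atTop (nhds L) := tendsto_atTop_ciSup hymono hybdd
    have hxy : x =ᶠ[atTop] y := by
      filter_upwards [eventually_ge_atTop (0:ℝ)] with t ht
      simp [hy, max_eq_left ht]
    have htend : Tendsto x atTop (nhds L) := htendy.congr' hxy.symm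
    have hLle : L ≤ -a := ciSup_le fun t => (hlt (max t 0) (le_max_right t 0)).le
    have hyleL : ∀ t, y t ≤ L := fun t => le_ciSup hybdd t
    have hy0 : y 0 = x 0 := by simp [hy]
    have hLeq : L = -a := by
      by_contra hne
      have hLlt : L < -a := lt_of_le_of_ne hLle hne
      -- x t ∈ [x 0, L] for t ≥ 0
      have hmemK : ∀ t, 0 ≤ t → x t ∈ Icc (x 0) L := by
        intro t ht
        constructor
        · exact hmono (self_mem_Ici) ht ht
        · have := hyleL t
          rw [hy] at this
          simpa [sup_eq_left.mpr ht] using this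
      have hKne : (Icc (x 0) L).Nonempty := ⟨x 0, le_rfl, by
        have := hyleL 0; rwa [hy0] at this⟩
      have hfc : ContinuousOn (fun z : ℝ => z * (1 - k * z ^ 2)) (Icc (x 0) L) := by fun_prop
      obtain ⟨m, hmK, hmin⟩ := isCompact_Icc.exists_isMinOn hKne hfc
      have hest : ∀ t, 0 ≤ t → m * (1 - k * m ^ 2) ≤ x t * (1 - k * (x t) ^ 2) :=
        fun t ht => isMinOn_iff.mp hmin (x t) (hmemK t ht)
      set δ := m * (1 - k * m ^ 2) with hδ
      have hδpos : 0 < δ := hfpos m (lt_of_le_of_lt hmK.2 hLlt)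
      -- g t = x t - δ t is monotone on Ici 0
      have hg : MonotoneOn (fun t => x t - δ * t) (Ici (0:ℝ)) := by
        apply monotoneOn_of_deriv_nonneg (convex_Ici 0)
          (by fun_prop) (by fun_prop)
        intro t ht
        rw [interior_Ici] at ht
        have hd : deriv (fun t => x t - δ * t) t = deriv x t - δ := by
          have h1 : HasDerivAt (fun t => x t - δ * t) (deriv x t - δ * 1) t :=
            (hdiff t).hasDerivAt.sub ((hasDerivAt_id t).const_mul δ)
          simpa using h1.deriv
        rw [hd, hode t ht.le, hδ]
        linarith [hest t ht.le]
      have hbig : ∀ t, 0 ≤ t → x 0 + δ * t ≤ x t := by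
        intro t ht
        have := hg (self_mem_Ici) ht ht
        simp at this
        linarith
      set T := (L - x 0) / δ + 1 with hT
      have hT0 : 0 ≤ T := by
        rw [hT]
        have : 0 ≤ (L - x 0) / δ := div_nonneg (by
          have := hyleL 0; rw [hy0] at this; linarith) hδpos.le
        linarith
      have h1 := hbig T hT0
      have h2 : x T ≤ L := by
        have := hyleL T
        rw [hy] at this
        simpa [sup_eq_left.mpr hT0] using this
      have hδne : δ ≠ 0 := ne_of_gt hδpos
      have : x 0 + δ * T = L + δ := by
        rw [hT]; field_simp; ring
      linarith
    rw [← hLeq]; exact htend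
  · -- Case x 0 = -a : constant solution
    have heq : ∀ t, 0 ≤ t → x t = -a := by
      intro t ht
      have h := hshift t ht
      rw [hc] at h
      simp at h
      linarith
    have : (fun _ : ℝ => -a) =ᶠ[atTop] x := by
      filter_upwards [eventually_ge_atTop (0:ℝ)] with t ht
      exact (heq t ht).symm
    exact tendsto_const_nhds.congr' this
  · -- Case -a < x 0 < 0 : x decreases to -a
    have hgt : ∀ t, 0 ≤ t → -a < x t := by
      intro t ht
      have h := hshift t ht
      have : 0 < x t + a := by
        rw [h]; exact mul_pos hc (Real.exp_pos _)
      linarith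
    have hderiv_nonpos : ∀ t, 0 ≤ t → deriv x t ≤ 0 := by
      intro t ht
      rw [hode t ht]
      exact (hfneg _ (hgt t ht) (hneg t ht)).le
    have hanti : AntitoneOn x (Ici (0:ℝ)) := by
      apply antitoneOn_of_deriv_nonpos (convex_Ici 0) hxc.continuousOn
        hdiff.differentiableOn
      intro t ht
      rw [interior_Ici] at ht
      exact hderiv_nonpos t ht.le
    set y : ℝ → ℝ := fun t => x (max t 0) with hy
    have hyanti : Antitone y := by
      intro s t hst
      exact hanti (le_max_right s 0) (le_max_right t 0) (max_le_max hst le_rfl)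
    have hybdd : BddBelow (range y) := by
      refine ⟨-a, ?_⟩
      rintro _ ⟨t, rfl⟩
      exact (hgt (max t 0) (le_max_right t 0)).le
    set L := ⨅ t, y t with hL
    have htendy : Tendsto y atTop (nhds L) := tendsto_atTop_ciInf hyanti hybdd
    have hxy : x =ᶠ[atTop] y := by
      filter_upwards [eventually_ge_atTop (0:ℝ)] with t ht
      simp [hy, max_eq_left ht]
    have htend : Tendsto x atTop (nhds L) := htendy.congr' hxy.symm
    have hLge : -a ≤ L := le_ciInf fun t => (hgt (max t 0) (le_max_right t 0)).le
    have hyleL : ∀ t, L ≤ y t := fun t => ciInf_le hybdd t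
    have hy0 : y 0 = x 0 := by simp [hy]
    have hLeq : L = -a := by
      by_contra hne
      have hLgt : -a < L := lt_of_le_of_ne hLge (Ne.symm hne)
      have hmemK : ∀ t, 0 ≤ t → x t ∈ Icc L (x 0) := by
        intro t ht
        constructor
        · have := hyleL t
          rw [hy] at this
          simpa [sup_eq_left.mpr ht] using this
        · exact hanti (self_mem_Ici) ht ht
      have hKne : (Icc L (x 0)).Nonempty := ⟨x 0, by
        have := hyleL 0; rw [hy0] at this; exact ⟨this, le_rfl⟩⟩
      have hfc : ContinuousOn (fun z : ℝ => z * (1 - k * z ^ 2)) (Icc L (x 0)) := by fun_prop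
      obtain ⟨m, hmK, hmax⟩ := isCompact_Icc.exists_isMaxOn hKne hfc
      have hest : ∀ t, 0 ≤ t → x t * (1 - k * (x t) ^ 2) ≤ m * (1 - k * m ^ 2) :=
        fun t ht => isMaxOn_iff.mp hmax (x t) (hmemK t ht)
      set δ := -(m * (1 - k * m ^ 2)) with hδ
      have hδpos : 0 < δ := by
        have : m * (1 - k * m ^ 2) < 0 :=
          hfneg m (lt_of_lt_of_le hLgt hmK.1) (lt_of_le_of_lt hmK.2 h0)
        linarith
      have hg : AntitoneOn (fun t => x t + δ * t) (Ici (0:ℝ)) := by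
        apply antitoneOn_of_deriv_nonpos (convex_Ici 0)
          (by fun_prop) (by fun_prop)
        intro t ht
        rw [interior_Ici] at ht
        have hd : deriv (fun t => x t + δ * t) t = deriv x t + δ := by
          have h1 : HasDerivAt (fun t => x t + δ * t) (deriv x t + δ * 1) t :=
            (hdiff t).hasDerivAt.add ((hasDerivAt_id t).const_mul δ)
          simpa using h1.deriv
        rw [hd, hode t ht.le, hδ]
        linarith [hest t ht.le]
      have hsmall : ∀ t, 0 ≤ t → x t ≤ x 0 - δ * t := by
        intro t ht
        have := hg (self_mem_Ici) ht ht
        simp at this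
        linarith
      set T := (x 0 - L) / δ + 1 with hT
      have hT0 : 0 ≤ T := by
        rw [hT]
        have : 0 ≤ (x 0 - L) / δ := div_nonneg (by
          have := hyleL 0; rw [hy0] at this; linarith) hδpos.le
        linarith
      have h1 := hsmall T hT0
      have h2 : L ≤ x T := by
        have := hyleL T
        rw [hy] at this
        simpa [sup_eq_left.mpr hT0] using this
      have hδne : δ ≠ 0 := ne_of_gt hδpos
      have : x 0 - δ * T = L - δ := by
        rw [hT]; field_simp; ring
      linarith
    rw [← hLeq]; exact htend
end

section
/- Let n ≥ 2 and let δ : (ℝ²)ⁿ → ℝ^{n(n-1)/2} be the distance function whose component indexed by a pair i < j is (1/2)‖x_i - x_j‖². Then for every x ∈ (ℝ²)ⁿ, the rank of the derivative of δ at x (the dimension of the range of the Fréchet derivative) is at most 2n - 3. -/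
noncomputable def distFun (n : ℕ) (x : Fin n → EuclideanSpace ℝ (Fin 2)) :
    {p : Fin n × Fin n // p.1 < p.2} → ℝ :=
  fun p => (1 / 2) * ‖x p.1.1 - x p.1.2‖ ^ 2

open scoped RealInnerProductSpace

noncomputable abbrev E2 := EuclideanSpace ℝ (Fin 2)

noncomputable def halfSq : E2 → ℝ := fun y => (1 / 2 : ℝ) * ‖y‖ ^ 2

lemma hasFDerivAt_halfSq (y : E2) :
    HasFDerivAt halfSq (innerSL ℝ y) y := by
  have h : HasFDerivAt (fun z : E2 => ⟪z, z⟫) ((fderivInnerCLM ℝ (y, y)).comp ((ContinuousLinearMap.id ℝ E2).prod (ContinuousLinearMap.id ℝ E2))) y :=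
    (hasFDerivAt_id y).inner ℝ (hasFDerivAt_id y)
  have h2 := h.const_smul (1/2 : ℝ)
  have e1 : ((1/2 : ℝ) • fun z : E2 => ⟪z, z⟫) = halfSq := by
    funext z
    simp only [Pi.smul_apply, halfSq, smul_eq_mul, real_inner_self_eq_norm_sq]
  have e2 : ((1/2 : ℝ) • ((fderivInnerCLM ℝ (y, y)).comp ((ContinuousLinearMap.id ℝ E2).prod (ContinuousLinearMap.id ℝ E2)))) = innerSL ℝ y := by
    ext v
    simp [fderivInnerCLM, real_inner_comm]
    ring
  rw [e1] at h2
  rw [e2] at h2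
  exact h2

variable {n : ℕ}

noncomputable def Lp (n : ℕ) (p : {p : Fin n × Fin n // p.1 < p.2}) :
    (Fin n → E2) →L[ℝ] E2 :=
  (ContinuousLinearMap.proj p.1.1 : (Fin n → E2) →L[ℝ] E2) -
    (ContinuousLinearMap.proj p.1.2 : (Fin n → E2) →L[ℝ] E2)

noncomputable def Dmap (n : ℕ) (x : Fin n → E2) :
    (Fin n → E2) →L[ℝ] ({p : Fin n × Fin n // p.1 < p.2} → ℝ) :=
  ContinuousLinearMap.pi fun p => (innerSL ℝ (x p.1.1 - x p.1.2)).comp (Lp n p)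

lemma hasFDerivAt_distFun (x : Fin n → E2) :
    HasFDerivAt (distFun n) (Dmap n x) x := by
  apply hasFDerivAt_pi.2
  intro p
  have h := (hasFDerivAt_halfSq (Lp n p x)).comp x (Lp n p).hasFDerivAt
  have e : (Lp n p) x = x p.1.1 - x p.1.2 := by simp [Lp]
  rw [e] at h
  exact h

lemma Dmap_apply (x v : Fin n → E2) (p : {p : Fin n × Fin n // p.1 < p.2}) :
    Dmap n x v p = ⟪x p.1.1 - x p.1.2, v p.1.1 - v p.1.2⟫ := by
  simp [Dmap, Lp, PiLp.inner_apply, Fin.sum_univ_two, RCLike.inner_apply]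
  ring

/-- rotation by 90 degrees -/
noncomputable def rot : E2 → E2 := fun y => WithLp.toLp 2 ![-(y 1), y 0]

lemma inner_rot_cross (a b : E2) : ⟪a - b, rot a - rot b⟫ = (a 0 - b 0) * (b 1 - a 1) + (a 1 - b 1) * (a 0 - b 0) := by
  simp only [PiLp.inner_apply, Fin.sum_univ_two, RCLike.inner_apply, conj_trivial,
    PiLp.sub_apply, rot, PiLp.toLp_apply, Matrix.cons_val_zero, Matrix.cons_val_one, Matrix.head_cons]
  ring

/-- For `n ≥ 2`, the rank of the derivative of the distance function at any
configuration (the dimension of the range of its Fréchet derivative) is at most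
`2n - 3`. -/
theorem stmt11 (n : ℕ) (hn : 2 ≤ n) (x : Fin n → EuclideanSpace ℝ (Fin 2)) :
    Module.finrank ℝ (LinearMap.range ((fderiv ℝ (distFun n) x) : (Fin n → EuclideanSpace ℝ (Fin 2)) →ₗ[ℝ] ({p : Fin n × Fin n // p.1 < p.2} → ℝ))) ≤ 2 * n - 3 := by
  rw [(hasFDerivAt_distFun x).fderiv]
  set f : (Fin n → E2) →ₗ[ℝ] ({p : Fin n × Fin n // p.1 < p.2} → ℝ) :=
    (Dmap n x).toLinearMap with hf
  have hdom : Module.finrank ℝ (Fin n → E2) = 2 * n := by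
    simp [Module.finrank_pi_fintype, finrank_euclideanSpace_fin, mul_comm]
  have hrn := LinearMap.finrank_range_add_finrank_ker f
  rw [hdom] at hrn
  have hker : 3 ≤ Module.finrank ℝ (LinearMap.ker f) := by
    by_cases hcoll : ∀ i j, x i = x j
    · -- derivative is zero, kernel is everything
      have : LinearMap.ker f = ⊤ := by
        ext v
        simp only [LinearMap.mem_ker, Submodule.mem_top, iff_true]
        funext p
        show Dmap n x v p = 0
        rw [Dmap_apply, hcoll p.1.1 p.1.2, sub_self, inner_zero_left]
      rw [this, finrank_top, hdom]
      omega
    · push_neg at hcoll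
      obtain ⟨i0, j0, hij⟩ := hcoll
      -- three independent kernel elements
      set w : Fin 3 → (Fin n → E2) :=
        ![fun _ => EuclideanSpace.single 0 1, fun _ => EuclideanSpace.single 1 1,
          fun i => rot (x i)] with hw
      have hmem : ∀ k, w k ∈ LinearMap.ker f := by
        intro k
        have hker_of : ∀ v : Fin n → E2,
            (∀ p : {p : Fin n × Fin n // p.1 < p.2},
              ⟪x p.1.1 - x p.1.2, v p.1.1 - v p.1.2⟫ = 0) → v ∈ LinearMap.ker f := by
          intro v hv
          simp only [LinearMap.mem_ker]
          funext p
          exact hv p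
        fin_cases k
        · apply hker_of; intro p; simp [hw]
        · apply hker_of; intro p; simp [hw]
        · apply hker_of; intro p
          show ⟪x p.1.1 - x p.1.2, rot (x p.1.1) - rot (x p.1.2)⟫ = 0
          rw [inner_rot_cross]; ring
      have hli : LinearIndependent ℝ w := by
        rw [Fintype.linearIndependent_iff]
        intro g hsum
        have h := fun (i : Fin n) (c : Fin 2) => congrArg (fun v : E2 => v c) (congrFun hsum i)
        simp only [hw, Finset.sum_apply, Fin.sum_univ_three, Matrix.cons_val_zero,
          Matrix.cons_val_one, Matrix.head_cons, Matrix.cons_val_two, Matrix.tail_cons,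
          Pi.smul_apply, PiLp.smul_apply, PiLp.add_apply, PiLp.zero_apply,
          smul_eq_mul, Pi.zero_apply, rot, PiLp.toLp_apply, EuclideanSpace.single_apply] at h
        have h00 := h i0 0
        have h01 := h j0 0
        have h10 := h i0 1
        have h11 := h j0 1
        simp only [Matrix.cons_val_zero, Matrix.cons_val_one, Matrix.head_cons] at h00 h01 h10 h11
        norm_num at h00 h01 h10 h11
        have hc : x i0 0 ≠ x j0 0 ∨ x i0 1 ≠ x j0 1 := by
          by_contra hc
          push_neg at hc
          refine hij ?_
          ext c
          fin_cases c
          · exact hc.1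
          · exact hc.2
        have hg2 : g 2 = 0 := by
          rcases hc with hc | hc
          · have hne := sub_ne_zero.2 hc
            have h' : g 2 * (x i0 0 - x j0 0) = 0 := by linarith
            rcases mul_eq_zero.1 h' with h | h
            · exact h
            · exact absurd h hne
          · have hne := sub_ne_zero.2 hc
            have h' : g 2 * (x i0 1 - x j0 1) = 0 := by linarith
            rcases mul_eq_zero.1 h' with h | h
            · exact h
            · exact absurd h hne
        intro k
        fin_cases k
        · have hg0 : g 0 = 0 := by rw [hg2] at h00; linarith
          simpa using hg0
        · have hg1 : g 1 = 0 := by rw [hg2] at h10; linarith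
          simpa using hg1
        · simpa using hg2
      have hspan : Submodule.span ℝ (Set.range w) ≤ LinearMap.ker f := by
        rw [Submodule.span_le]
        rintro _ ⟨k, rfl⟩
        exact hmem k
      have := Submodule.finrank_mono hspan
      rw [finrank_span_eq_card hli] at this
      simpa using this
  omega
end

section
/- Let f : ℝ → ℝ be continuously differentiable. Then the image under f of the set of critical points, f '' {x ∈ ℝ : f'(x) = 0}, is a Lebesgue-null subset of ℝ. -/
/-- One-dimensional Sard theorem: the set of critical values of a `C¹` function
`f : ℝ → ℝ` is Lebesgue-null. -/
theorem stmt13 (f : ℝ → ℝ) (hf : ContDiff ℝ 1 f) :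
    MeasureTheory.volume (f '' {x : ℝ | deriv f x = 0}) = 0 := by
  apply MeasureTheory.addHaar_image_eq_zero_of_det_fderivWithin_eq_zero
    (f' := fun x => fderiv ℝ f x)
  · intro x hx
    exact (hf.differentiable one_ne_zero x).hasFDerivAt.hasFDerivWithinAt
  · intro x hx
    have : fderiv ℝ f x = ContinuousLinearMap.smulRight (1 : ℝ →L[ℝ] ℝ) (deriv f x) := by
      rw [← toSpanSingleton_deriv, ContinuousLinearMap.smulRight_one_eq_toSpanSingleton]
    rw [this, ContinuousLinearMap.smulRight_one_eq_toSpanSingleton, ContinuousLinearMap.det_toSpanSingleton, hx]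
end
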